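/- Let n ≥ 2 and let C* = {(x,p) ∈ ℝⁿ × ℝⁿ : (x,p) ≠ (0,0) and xⱼpₖ − xₖpⱼ = 0 for all j,k}. Define on C* the equivalence (x,p) ∼ (x',p') iff there exists a real n×n matrix A with AᵀA = 1 and det A = 1 such that x' = A x and p' = A p, and define on ℝ² ∖ {0} the equivalence (λ,μ) ≈ (λ',μ') iff (λ',μ') = (λ,μ) or (λ',μ') = (−λ,−μ). Then the map (λ,μ) ↦ (λ·e₁, μ·e₁), where e₁ = (1,0,…,0), descends to a bijection from (ℝ² ∖ {0})/≈ onto C*/∼. -/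

import Mathlib

open Matrix Finset

lemma so_exists (n : ℕ) (hn : 2 ≤ n) (v : Fin n → ℝ)
    (hv : ∑ i, v i * v i = 1) :
    ∃ B : Matrix (Fin n) (Fin n) ℝ, Bᵀ * B = 1 ∧ B.det = 1 ∧
      B.mulVec (fun i : Fin n => if (i : ℕ) = 0 then (1:ℝ) else 0) = v := by
  set i0 : Fin n := ⟨0, by omega⟩ with hi0
  set i1 : Fin n := ⟨1, by omega⟩ with hi1
  -- get an orthonormal basis of EuclideanSpace with b i0 = v
  have hcard : Module.finrank ℝ (EuclideanSpace ℝ (Fin n)) = Fintype.card (Fin n) := by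
    simp [finrank_euclideanSpace]
  have horth : Orthonormal ℝ (Set.restrict ({i0} : Set (Fin n))
      (fun _ : Fin n => (WithLp.toLp 2 v : EuclideanSpace ℝ (Fin n)))) := by
    rw [orthonormal_iff_ite]
    intro i j
    have hij : i = j := Subtype.ext (by
      have h1 := i.2; have h2 := j.2
      simp only [Set.mem_singleton_iff] at h1 h2
      rw [h1, h2])
    subst hij
    simp only [if_pos rfl, Set.restrict_apply]
    simp only [PiLp.inner_apply, RCLike.inner_apply, starRingEnd_apply, star_trivial, WithLp.ofLp_toLp]
    exact hv
  obtain ⟨b, hb⟩ := horth.exists_orthonormalBasis_extension_of_card_eq hcard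
  have hbv : ∀ i, b i0 i = v i := by
    intro i; simp [hb i0 (Set.mem_singleton i0)]
  have hbon := orthonormal_iff_ite.mp b.orthonormal
  set B : Matrix (Fin n) (Fin n) ℝ := Matrix.of (fun i j => b j i) with hB
  have hBo : Bᵀ * B = 1 := by
    ext j k
    simp only [Matrix.mul_apply, Matrix.transpose_apply, hB, Matrix.of_apply, Matrix.one_apply]
    have := hbon j k
    simp only [PiLp.inner_apply, RCLike.inner_apply, starRingEnd_apply, star_trivial] at this
    rw [← this]
    exact Finset.sum_congr rfl fun _ _ => mul_comm _ _
  have hBdet : B.det * B.det = 1 := by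
    have : B.det * B.det = (Bᵀ * B).det := by rw [Matrix.det_mul, Matrix.det_transpose]
    rw [this, hBo, Matrix.det_one]
  have hBmv : B.mulVec (fun i : Fin n => if (i : ℕ) = 0 then (1:ℝ) else 0) = v := by
    ext i
    have : ∀ j : Fin n, ((j : ℕ) = 0) ↔ (j = i0) := by
      intro j; constructor
      · intro h; exact Fin.ext h
      · intro h; rw [h]
    simp only [Matrix.mulVec, dotProduct, hB, Matrix.of_apply, this, mul_ite, mul_one, mul_zero]
    rw [Finset.sum_ite_eq' Finset.univ i0 (fun j => b j i)]
    simp [hbv i]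
  rcases mul_self_eq_one_iff.mp hBdet with h1 | h1
  · exact ⟨B, hBo, h1, hBmv⟩
  · set d : Fin n → ℝ := fun i => if i = i1 then -1 else 1 with hd
    have hdd : ∀ i, d i * d i = 1 := by intro i; by_cases h : i = i1 <;> simp [hd, h]
    set D : Matrix (Fin n) (Fin n) ℝ := Matrix.diagonal d with hD
    have hDD : D * D = 1 := by
      have h2 : (fun i => d i * d i) = fun _ : Fin n => (1:ℝ) := funext hdd
      rw [hD, Matrix.diagonal_mul_diagonal, h2, Matrix.diagonal_one]
    have hDdet : D.det = -1 := by
      rw [hD, Matrix.det_diagonal, hd]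
      rw [Finset.prod_ite_eq' Finset.univ i1 (fun _ => (-1:ℝ))]
      simp
    refine ⟨B * D, ?_, ?_, ?_⟩
    · rw [Matrix.transpose_mul, hD, Matrix.diagonal_transpose, ← hD, Matrix.mul_assoc,
        ← Matrix.mul_assoc Bᵀ B D, hBo, Matrix.one_mul, hDD]
    · rw [Matrix.det_mul, h1, hDdet]; ring
    · rw [← Matrix.mulVec_mulVec]
      have : D.mulVec (fun i : Fin n => if (i : ℕ) = 0 then (1:ℝ) else 0)
          = (fun i : Fin n => if (i : ℕ) = 0 then (1:ℝ) else 0) := by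
        ext i
        rw [hD, Matrix.mulVec_diagonal]
        by_cases h : (i : ℕ) = 0
        · have : i ≠ i1 := by intro hc; rw [hc] at h; simp [hi1] at h
          simp [h, hd, this]
        · simp [h]
      rw [this, hBmv]

/-- For `n ≥ 2`, the physical phase space of the `SO(n)` gauge model is a
(punctured) plane modulo `ℤ₂`: the map `(λ,μ) ↦ (λ·e₁, μ·e₁)` descends to a
bijection from `(ℝ² ∖ {0})/±` onto `C*/SO(n)`, where `C*` is the (punctured)
constraint surface `{(x,p) ≠ 0 : xⱼpₖ − xₖpⱼ = 0}` and `SO(n)` acts diagonally. -/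
theorem stmt5 (n : ℕ) (hn : 2 ≤ n)
    (Cstar : Set ((Fin n → ℝ) × (Fin n → ℝ)))
    (hC : Cstar = {q | q ≠ 0 ∧ ∀ j k : Fin n, q.1 j * q.2 k - q.1 k * q.2 j = 0})
    (sim : ((Fin n → ℝ) × (Fin n → ℝ)) → ((Fin n → ℝ) × (Fin n → ℝ)) → Prop)
    (hsim : ∀ q q', sim q q' ↔ ∃ A : Matrix (Fin n) (Fin n) ℝ,
        Aᵀ * A = 1 ∧ A.det = 1 ∧ q'.1 = A.mulVec q.1 ∧ q'.2 = A.mulVec q.2)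
    (e1 : Fin n → ℝ) (he1 : e1 = fun i : Fin n => if (i : ℕ) = 0 then (1 : ℝ) else 0) :
    (∀ l mu : ℝ, (l, mu) ≠ (0, 0) → (l • e1, mu • e1) ∈ Cstar) ∧
    (∀ l mu l' mu' : ℝ, (l, mu) ≠ (0, 0) → (l', mu') ≠ (0, 0) →
        (sim (l • e1, mu • e1) (l' • e1, mu' • e1) ↔
          ((l', mu') = (l, mu) ∨ (l', mu') = (-l, -mu)))) ∧
    (∀ q ∈ Cstar, ∃ l mu : ℝ, (l, mu) ≠ ((0 : ℝ), (0 : ℝ)) ∧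
        sim (l • e1, mu • e1) q) := by
  set i0 : Fin n := ⟨0, by omega⟩ with hi0d
  have he1i0 : e1 i0 = 1 := by simp [he1, hi0d]
  have hiff : ∀ j : Fin n, ((j : ℕ) = 0) ↔ (j = i0) :=
    fun j => ⟨fun h => Fin.ext h, fun h => by rw [h]⟩
  have hsum1 : ∑ i, e1 i * e1 i = 1 := by
    have h : ∀ i : Fin n, e1 i * e1 i = if i = i0 then (1:ℝ) else 0 := by
      intro i
      by_cases h : i = i0 <;> simp [he1, h, hiff]
    rw [Finset.sum_congr rfl fun i _ => h i,
      Finset.sum_ite_eq' Finset.univ i0 (fun _ => (1:ℝ))]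
    simp
  refine ⟨?_, ?_, ?_⟩
  · -- Part 1
    intro l mu h
    rw [hC]
    refine ⟨?_, ?_⟩
    · intro h0
      apply h
      have h1 : l • e1 = 0 := congrArg Prod.fst h0
      have h2 : mu • e1 = 0 := congrArg Prod.snd h0
      have hl : l = 0 := by have := congrFun h1 i0; simpa [he1i0] using this
      have hmu : mu = 0 := by have := congrFun h2 i0; simpa [he1i0] using this
      rw [hl, hmu]
    · intro j k
      simp only [Pi.smul_apply, smul_eq_mul]
      ring
  · -- Part 2
    intro l mu l' mu' h h'
    rw [hsim]
    constructor
    · rintro ⟨A, hA, hdet, h1, h2⟩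
      simp only at h1 h2
      rw [Matrix.mulVec_smul] at h1 h2
      set w : Fin n → ℝ := A.mulVec e1 with hw
      have h1i : ∀ i, l' * e1 i = l * w i := by
        intro i; have := congrFun h1 i; simpa using this
      have h2i : ∀ i, mu' * e1 i = mu * w i := by
        intro i; have := congrFun h2 i; simpa using this
      have hAe : ∀ i, w i = A i i0 := by
        intro i
        rw [hw]
        simp only [Matrix.mulVec, dotProduct, he1, hiff, mul_ite, mul_one, mul_zero]
        rw [Finset.sum_ite_eq' Finset.univ i0 (fun j => A i j)]
        simp
      have hsq : ∑ i, w i * w i = 1 := by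
        have hAA : (Aᵀ * A) i0 i0 = (1 : Matrix (Fin n) (Fin n) ℝ) i0 i0 := by rw [hA]
        simp only [Matrix.mul_apply, Matrix.transpose_apply, Matrix.one_apply_eq] at hAA
        rw [Finset.sum_congr rfl fun i _ => by rw [hAe i]]
        exact hAA
      by_cases hl : l = 0
      · have hmu : mu ≠ 0 := by
          intro hm; exact h (by rw [hl, hm])
        have hl' : l' = 0 := by
          have := h1i i0; rw [he1i0, hl] at this; simpa using this
        have hwi : ∀ i, w i = (mu'/mu) * e1 i := by
          intro i
          have := h2i i
          field_simp
          linarith [this]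
        have hmm : mu' * mu' = mu * mu := by
          have : ∑ i, w i * w i = (mu'/mu) * (mu'/mu) * ∑ i, e1 i * e1 i := by
            rw [Finset.mul_sum]
            exact Finset.sum_congr rfl fun i _ => by rw [hwi i]; ring
          rw [hsq, hsum1, mul_one] at this
          field_simp at this
          linarith [this]
        rcases mul_self_eq_mul_self_iff.mp hmm with hmm' | hmm'
        · left; rw [Prod.mk.injEq]; exact ⟨hl'.trans hl.symm, hmm'⟩
        · right; rw [Prod.mk.injEq]; exact ⟨by rw [hl', hl, neg_zero], hmm'⟩
      · have hwi : ∀ i, w i = (l'/l) * e1 i := by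
          intro i
          have := h1i i
          field_simp
          linarith [this]
        have hll : l' * l' = l * l := by
          have : ∑ i, w i * w i = (l'/l) * (l'/l) * ∑ i, e1 i * e1 i := by
            rw [Finset.mul_sum]
            exact Finset.sum_congr rfl fun i _ => by rw [hwi i]; ring
          rw [hsq, hsum1, mul_one] at this
          field_simp at this
          linarith [this]
        rcases mul_self_eq_mul_self_iff.mp hll with hll' | hll'
        · left; rw [Prod.mk.injEq]
          refine ⟨hll', ?_⟩
          have := h2i i0
          rw [he1i0, hwi i0, he1i0, hll'] at this
          field_simp at this
          linarith [this]
        · right; rw [Prod.mk.injEq]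
          refine ⟨hll', ?_⟩
          have := h2i i0
          rw [he1i0, hwi i0, he1i0, hll'] at this
          field_simp at this
          linarith [this]
    · rintro (he | he)
      · rw [Prod.mk.injEq] at he
        refine ⟨1, by rw [Matrix.transpose_one, Matrix.one_mul], Matrix.det_one, ?_, ?_⟩ <;>
          simp [Matrix.one_mulVec, he.1, he.2]
      · rw [Prod.mk.injEq] at he
        obtain ⟨B, hBo, hBdet, hBmv⟩ := so_exists n hn (-e1) (by
          simp only [Pi.neg_apply, neg_mul_neg]; exact hsum1)
        rw [← he1] at hBmv
        refine ⟨B, hBo, hBdet, ?_, ?_⟩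
        · show l' • e1 = B.mulVec (l • e1)
          rw [Matrix.mulVec_smul, hBmv, he.1, smul_neg, neg_smul]
        · show mu' • e1 = B.mulVec (mu • e1)
          rw [Matrix.mulVec_smul, hBmv, he.2, smul_neg, neg_smul]
  · -- Part 3
    intro q hq
    rw [hC] at hq
    obtain ⟨hne, hcr⟩ := hq
    by_cases hx : q.1 = 0
    · have hp : q.2 ≠ 0 := by
        intro hp
        exact hne (Prod.ext hx hp)
      obtain ⟨j, hj⟩ := Function.ne_iff.mp hp
      simp only [Pi.zero_apply] at hj
      have hS : 0 < ∑ i, q.2 i * q.2 i :=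
        Finset.sum_pos' (fun i _ => mul_self_nonneg _)
          ⟨j, Finset.mem_univ j, mul_self_pos.mpr hj⟩
      set r : ℝ := Real.sqrt (∑ i, q.2 i * q.2 i) with hrdef
      have hr : r ≠ 0 := ne_of_gt (Real.sqrt_pos.mpr hS)
      have hr2 : r * r = ∑ i, q.2 i * q.2 i := Real.mul_self_sqrt hS.le
      obtain ⟨B, hBo, hBdet, hBmv⟩ := so_exists n hn (fun i => r⁻¹ * q.2 i) (by
        have h : ∑ i, (r⁻¹ * q.2 i) * (r⁻¹ * q.2 i)
            = (r⁻¹ * r⁻¹) * ∑ i, q.2 i * q.2 i := by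
          rw [Finset.mul_sum]; exact Finset.sum_congr rfl fun i _ => by ring
        rw [h, ← hr2]
        field_simp)
      rw [← he1] at hBmv
      refine ⟨0, r, ?_, ?_⟩
      · intro hc; rw [Prod.mk.injEq] at hc; exact hr hc.2
      · rw [hsim]
        refine ⟨B, hBo, hBdet, ?_, ?_⟩
        · show q.1 = B.mulVec ((0:ℝ) • e1)
          rw [zero_smul, Matrix.mulVec_zero, hx]
        · show q.2 = B.mulVec (r • e1)
          rw [Matrix.mulVec_smul, hBmv]
          ext i
          simp only [Pi.smul_apply, smul_eq_mul]
          field_simp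
    · obtain ⟨j, hj⟩ := Function.ne_iff.mp hx
      simp only [Pi.zero_apply] at hj
      have hpt : ∀ k, q.2 k = (q.2 j / q.1 j) * q.1 k := by
        intro k
        have h := hcr j k
        field_simp
        linear_combination h
      have hS : 0 < ∑ i, q.1 i * q.1 i :=
        Finset.sum_pos' (fun i _ => mul_self_nonneg _)
          ⟨j, Finset.mem_univ j, mul_self_pos.mpr hj⟩
      set r : ℝ := Real.sqrt (∑ i, q.1 i * q.1 i) with hrdef
      have hr : r ≠ 0 := ne_of_gt (Real.sqrt_pos.mpr hS)
      have hr2 : r * r = ∑ i, q.1 i * q.1 i := Real.mul_self_sqrt hS.le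
      obtain ⟨B, hBo, hBdet, hBmv⟩ := so_exists n hn (fun i => r⁻¹ * q.1 i) (by
        have h : ∑ i, (r⁻¹ * q.1 i) * (r⁻¹ * q.1 i)
            = (r⁻¹ * r⁻¹) * ∑ i, q.1 i * q.1 i := by
          rw [Finset.mul_sum]; exact Finset.sum_congr rfl fun i _ => by ring
        rw [h, ← hr2]
        field_simp)
      rw [← he1] at hBmv
      refine ⟨r, (q.2 j / q.1 j) * r, ?_, ?_⟩
      · intro hc; rw [Prod.mk.injEq] at hc; exact hr hc.1
      · rw [hsim]
        refine ⟨B, hBo, hBdet, ?_, ?_⟩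
        · show q.1 = B.mulVec (r • e1)
          rw [Matrix.mulVec_smul, hBmv]
          ext i
          simp only [Pi.smul_apply, smul_eq_mul]
          field_simp
        · show q.2 = B.mulVec (((q.2 j / q.1 j) * r) • e1)
          rw [Matrix.mulVec_smul, hBmv]
          ext i
          simp only [Pi.smul_apply, smul_eq_mul]
          rw [hpt i]
          field_simp
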